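/- For all t ≥ s > 0 and x, y ∈ ℝ, E[(u(t,x) - u(s,y))²] = (1/√(2π)) (√(2(t-s)) + Δ(s,t,x-y)), where Δ(s,t,z) = ∫₀^s ( (2(t-r))^{-1/2} - 2(t+s-2r)^{-1/2} exp(-z²/(2(t+s-2r))) + (2(s-r))^{-1/2} ) dr. -/

import Mathlib

open MeasureTheory Real intervalIntegral

/-- Covariance `R t x s y = E[u(t,x)u(s,y)]` of the stochastic heat equation solution. -/
noncomputable def heatCov (t x s y : ℝ) : ℝ :=
  (Real.sqrt (2 * π))⁻¹ *
    ∫ r in Set.Ioc (0 : ℝ) (min s t),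
      (Real.sqrt (t + s - 2 * r))⁻¹ * Real.exp (-(x - y) ^ 2 / (2 * (t + s - 2 * r)))

/-- The function `Δ(s,t,z)`. -/
noncomputable def heatDelta (s t z : ℝ) : ℝ :=
  ∫ r in Set.Ioc (0 : ℝ) s,
    ((Real.sqrt (2 * (t - r)))⁻¹
      - 2 * (Real.sqrt (t + s - 2 * r))⁻¹ * Real.exp (-z ^ 2 / (2 * (t + s - 2 * r)))
      + (Real.sqrt (2 * (s - r)))⁻¹)

lemma inv_sqrt_eq_rpow (u : ℝ) : (Real.sqrt u)⁻¹ = u ^ (-(1 / 2) : ℝ) := by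
  rcases le_or_gt 0 u with h | h
  · rw [Real.rpow_neg h, Real.sqrt_eq_rpow]
  · rw [Real.sqrt_eq_zero_of_nonpos h.le, inv_zero,
      Real.rpow_def_of_neg h]
    have : Real.cos (-(1 / 2) * π) = 0 := by
      rw [show (-(1/2) : ℝ) * π = -(π/2) by ring, Real.cos_neg, Real.cos_pi_div_two]
    rw [this, mul_zero]

lemma sqrtInv_intervalIntegrable (τ a b : ℝ) :
    IntervalIntegrable (fun r => (Real.sqrt (2 * (τ - r)))⁻¹) volume a b := by
  have h0 : IntervalIntegrable (fun v : ℝ => v ^ (-(1 / 2) : ℝ)) volume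
      (2 * (τ - a)) (2 * (τ - b)) := intervalIntegrable_rpow' (by norm_num)
  have h1 := h0.comp_mul_left (c := 2)
  have h2 := h1.comp_sub_left τ
  have ha : τ - 2 * (τ - a) / 2 = a := by ring
  have hb : τ - 2 * (τ - b) / 2 = b := by ring
  rw [ha, hb] at h2
  refine h2.congr ?_
  intro r _; dsimp only
  rw [inv_sqrt_eq_rpow]

lemma sqrtInv_integrableOn (τ a b : ℝ) (hab : a ≤ b) :
    IntegrableOn (fun r => (Real.sqrt (2 * (τ - r)))⁻¹) (Set.Ioc a b) := by
  have := sqrtInv_intervalIntegrable τ a b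
  rwa [intervalIntegrable_iff_integrableOn_Ioc_of_le hab] at this

lemma sqrtInv_integral_val (s t : ℝ) (hst : s ≤ t) :
    ∫ r in Set.Ioc s t, (Real.sqrt (2 * (t - r)))⁻¹ = Real.sqrt (2 * (t - s)) := by
  rw [← integral_of_le hst]
  have h1 : (∫ r in s..t, (Real.sqrt (2 * (t - r)))⁻¹)
      = ∫ u in (t - t)..(t - s), (Real.sqrt (2 * u))⁻¹ :=
    integral_comp_sub_left (fun u => (Real.sqrt (2 * u))⁻¹) t
  rw [h1, sub_self]
  have h2 : (∫ u in (0:ℝ)..(t - s), (Real.sqrt (2 * u))⁻¹)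
      = ∫ u in (0:ℝ)..(t - s), (2 * u) ^ (-(1 / 2) : ℝ) := by
    congr 1; funext u; rw [inv_sqrt_eq_rpow]
  rw [h2]
  rw [integral_comp_mul_left (fun v => v ^ (-(1 / 2) : ℝ)) two_ne_zero]
  rw [mul_zero, integral_rpow (Or.inl (by norm_num))]
  have h3 : (-(1 / 2) : ℝ) + 1 = 1 / 2 := by norm_num
  rw [h3, Real.zero_rpow (by norm_num), Real.sqrt_eq_rpow]
  simp only [smul_eq_mul]
  ring

lemma crossTerm_integrableOn (s t z : ℝ) (hs : 0 < s) (hts : s ≤ t) :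
    IntegrableOn (fun r =>
      (Real.sqrt (t + s - 2 * r))⁻¹ * Real.exp (-z ^ 2 / (2 * (t + s - 2 * r))))
      (Set.Ioc (0 : ℝ) s) := by
  have hbound : IntegrableOn (fun r => (Real.sqrt (2 * ((t + s) / 2 - r)))⁻¹)
      (Set.Ioc (0 : ℝ) s) := sqrtInv_integrableOn _ _ _ hs.le
  refine Integrable.mono' hbound ?_ ?_
  · apply Measurable.aestronglyMeasurable
    apply Measurable.mul
    · exact (measurable_const.sub (measurable_id.const_mul 2)).sqrt.inv
    · exact (measurable_const.div ((measurable_const.sub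
        (measurable_id.const_mul 2)).const_mul 2)).exp
  · filter_upwards [ae_restrict_mem measurableSet_Ioc] with r hr
    have h2 : 2 * ((t + s) / 2 - r) = t + s - 2 * r := by ring
    rw [h2, Real.norm_eq_abs, abs_mul, abs_of_nonneg (inv_nonneg.2 (Real.sqrt_nonneg _)),
      abs_of_nonneg (Real.exp_nonneg _)]
    have hden : 0 ≤ t + s - 2 * r := by
      have := hr.2; nlinarith
    have hexp : Real.exp (-z ^ 2 / (2 * (t + s - 2 * r))) ≤ 1 := by
      rw [Real.exp_le_one_iff]
      apply div_nonpos_of_nonpos_of_nonneg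
      · nlinarith [sq_nonneg z]
      · linarith
    calc (Real.sqrt (t + s - 2 * r))⁻¹ * Real.exp (-z ^ 2 / (2 * (t + s - 2 * r)))
        ≤ (Real.sqrt (t + s - 2 * r))⁻¹ * 1 := by
          exact mul_le_mul_of_nonneg_left hexp (inv_nonneg.2 (Real.sqrt_nonneg _))
      _ = (Real.sqrt (t + s - 2 * r))⁻¹ := mul_one _

/-- `E[(u(t,x) - u(s,y))²] = (1/√(2π)) (√(2(t-s)) + Δ(s,t,x-y))`, written via the covariance:
`E[(u(t,x)-u(s,y))²] = R(t,x,t,x) - 2R(t,x,s,y) + R(s,y,s,y)`. -/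
theorem stmt_1 (t s x y : ℝ) (hs : 0 < s) (hts : s ≤ t) :
    heatCov t x t x - 2 * heatCov t x s y + heatCov s y s y =
      (Real.sqrt (2 * π))⁻¹ * (Real.sqrt (2 * (t - s)) + heatDelta s t (x - y)) := by
  have ht : 0 < t := lt_of_lt_of_le hs hts
  unfold heatCov heatDelta
  rw [min_self, min_self, min_eq_left hts]
  -- simplify the diagonal integrands
  have ett : ∀ τ : ℝ, ∀ w : ℝ, (∫ r in Set.Ioc (0:ℝ) τ,
      (Real.sqrt (τ + τ - 2 * r))⁻¹ * Real.exp (-(w - w) ^ 2 / (2 * (τ + τ - 2 * r))))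
      = ∫ r in Set.Ioc (0:ℝ) τ, (Real.sqrt (2 * (τ - r)))⁻¹ := by
    intro τ w
    apply setIntegral_congr_fun measurableSet_Ioc
    intro r _
    have h1 : τ + τ - 2 * r = 2 * (τ - r) := by ring
    simp [h1, sub_self]
  rw [ett t x, ett s y]
  -- split the `t`-integral
  have hsplit : (∫ r in Set.Ioc (0:ℝ) t, (Real.sqrt (2 * (t - r)))⁻¹)
      = (∫ r in Set.Ioc (0:ℝ) s, (Real.sqrt (2 * (t - r)))⁻¹) + Real.sqrt (2 * (t - s)) := by
    rw [← Set.Ioc_union_Ioc_eq_Ioc hs.le hts,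
      setIntegral_union (Set.Ioc_disjoint_Ioc_of_le le_rfl) measurableSet_Ioc
        (sqrtInv_integrableOn t 0 s hs.le) (sqrtInv_integrableOn t s t hts),
      sqrtInv_integral_val s t hts]
  rw [hsplit]
  -- expand the Delta integral
  have hG := crossTerm_integrableOn s t (x - y) hs hts
  have hA := sqrtInv_integrableOn t 0 s hs.le
  have hB := sqrtInv_integrableOn s 0 s hs.le
  have hG2 : IntegrableOn (fun r =>
      2 * (Real.sqrt (t + s - 2 * r))⁻¹ * Real.exp (-(x - y) ^ 2 / (2 * (t + s - 2 * r))))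
      (Set.Ioc (0 : ℝ) s) := by
    refine IntegrableOn.congr_fun (hG.const_mul 2) (fun r _ => by ring) measurableSet_Ioc
  have hDelta : (∫ r in Set.Ioc (0:ℝ) s,
      ((Real.sqrt (2 * (t - r)))⁻¹
        - 2 * (Real.sqrt (t + s - 2 * r))⁻¹ * Real.exp (-(x - y) ^ 2 / (2 * (t + s - 2 * r)))
        + (Real.sqrt (2 * (s - r)))⁻¹))
      = (∫ r in Set.Ioc (0:ℝ) s, (Real.sqrt (2 * (t - r)))⁻¹)
        - 2 * (∫ r in Set.Ioc (0:ℝ) s,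
            (Real.sqrt (t + s - 2 * r))⁻¹ * Real.exp (-(x - y) ^ 2 / (2 * (t + s - 2 * r))))
        + (∫ r in Set.Ioc (0:ℝ) s, (Real.sqrt (2 * (s - r)))⁻¹) := by
    have step1 : (∫ r in Set.Ioc (0:ℝ) s,
        ((Real.sqrt (2 * (t - r)))⁻¹
          - 2 * (Real.sqrt (t + s - 2 * r))⁻¹ * Real.exp (-(x - y) ^ 2 / (2 * (t + s - 2 * r)))
          + (Real.sqrt (2 * (s - r)))⁻¹))
        = (∫ r in Set.Ioc (0:ℝ) s,
            ((Real.sqrt (2 * (t - r)))⁻¹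
              - 2 * (Real.sqrt (t + s - 2 * r))⁻¹
                * Real.exp (-(x - y) ^ 2 / (2 * (t + s - 2 * r)))))
          + ∫ r in Set.Ioc (0:ℝ) s, (Real.sqrt (2 * (s - r)))⁻¹ :=
      integral_add (hA.sub hG2) hB
    have step2 : (∫ r in Set.Ioc (0:ℝ) s,
        ((Real.sqrt (2 * (t - r)))⁻¹
          - 2 * (Real.sqrt (t + s - 2 * r))⁻¹
            * Real.exp (-(x - y) ^ 2 / (2 * (t + s - 2 * r)))))
        = (∫ r in Set.Ioc (0:ℝ) s, (Real.sqrt (2 * (t - r)))⁻¹)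
          - ∫ r in Set.Ioc (0:ℝ) s,
              2 * (Real.sqrt (t + s - 2 * r))⁻¹
                * Real.exp (-(x - y) ^ 2 / (2 * (t + s - 2 * r))) :=
      integral_sub hA hG2
    have step3 : (∫ r in Set.Ioc (0:ℝ) s,
        2 * (Real.sqrt (t + s - 2 * r))⁻¹
          * Real.exp (-(x - y) ^ 2 / (2 * (t + s - 2 * r))))
        = 2 * ∫ r in Set.Ioc (0:ℝ) s,
            (Real.sqrt (t + s - 2 * r))⁻¹
              * Real.exp (-(x - y) ^ 2 / (2 * (t + s - 2 * r))) := by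
      rw [← MeasureTheory.integral_const_mul]
      exact setIntegral_congr_fun measurableSet_Ioc (fun r _ => by ring)
    rw [step1, step2, step3]
  rw [hDelta]
  ring
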